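/- Let ε > 0 and suppose ω ⊆ 𝕋² = ℝ²/ℤ² contains an open ball of radius ε. Then there are at most 1/ε² directions v ∈ 𝕊¹ such that some geodesic line L_{z,v} = {z + tv : t ∈ ℝ} in 𝕋² is disjoint from ω. -/

import Mathlib

noncomputable section

/-- The flat torus `ℝ²/ℤ²`. -/
abbrev T2 : Type := AddCircle (1:ℝ) × AddCircle (1:ℝ)

/-- Natural projection `ℝ² → 𝕋²`. -/
def torusProj (p : ℝ × ℝ) : T2 := ((p.1 : AddCircle (1:ℝ)), (p.2 : AddCircle (1:ℝ)))

/-- The geodesic line through `z` with direction `v`: the image of `t ↦ z + t v` in `𝕋²`. -/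
def torusLine (z : T2) (v : ℝ × ℝ) : Set T2 := {w | ∃ t : ℝ, w = z + torusProj (t • v)}

open AddSubgroup

/-- The subgroup of ℝ generated by `v1` and `v2`, explicitly. -/
def latG (v1 v2 : ℝ) : AddSubgroup ℝ where
  carrier := {x | ∃ a b : ℤ, x = a * v1 + b * v2}
  zero_mem' := ⟨0, 0, by simp⟩
  add_mem' := by rintro x y ⟨a, b, rfl⟩ ⟨c, e, rfl⟩; exact ⟨a + c, b + e, by push_cast; ring⟩
  neg_mem' := by rintro x ⟨a, b, rfl⟩; exact ⟨-a, -b, by push_cast; ring⟩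

lemma zmultiples_abs' (a : ℝ) : zmultiples |a| = zmultiples a := by
  rcases abs_choice a with h | h
  · rw [h]
  · rw [h]
    ext x
    constructor
    · rintro ⟨k, rfl⟩; exact ⟨-k, by simp⟩
    · rintro ⟨k, rfl⟩; exact ⟨-k, by simp⟩

/-- If a coset of the subgroup generated by the coordinates of a unit vector avoids `(-ε, ε)`,
then the vector is a multiple of a coprime integer vector of norm at most `1/(2ε)`. -/
lemma key_lemma (ε : ℝ) (hε : 0 < ε) (v1 v2 : ℝ) (hv : v1 ^ 2 + v2 ^ 2 = 1) (d : ℝ)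
    (H : ∀ a b : ℤ, ε ≤ |d + a * v1 + b * v2|) :
    ∃ p q : ℤ, IsCoprime p q ∧ ((p : ℝ) ^ 2 + (q : ℝ) ^ 2) ≤ 1 / (4 * ε ^ 2) ∧
      v1 = p / Real.sqrt ((p : ℝ) ^ 2 + (q : ℝ) ^ 2) ∧
      v2 = q / Real.sqrt ((p : ℝ) ^ 2 + (q : ℝ) ^ 2) := by
  have hnd : ¬ Dense ((latG v1 v2 : AddSubgroup ℝ) : Set ℝ) := by
    intro h
    rw [Metric.dense_iff] at h
    obtain ⟨y, hy1, a, b, rfl⟩ := h (-d) ε hε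
    rw [Metric.mem_ball, Real.dist_eq, sub_neg_eq_add] at hy1
    have h2 := H a b
    rw [show d + a * v1 + b * v2 = (a * v1 + b * v2 : ℝ) + d by ring] at h2
    linarith
  rcases (latG v1 v2).dense_or_cyclic with h | ⟨a, ha⟩
  · exact absurd h hnd
  rw [← zmultiples_eq_closure] at ha
  set α := |a| with hαdef
  have hα : latG v1 v2 = zmultiples α := by rw [hαdef, zmultiples_abs']; exact ha
  have hαnn : 0 ≤ α := abs_nonneg a
  have hv1 : v1 ∈ zmultiples α := by rw [← hα]; exact ⟨1, 0, by simp⟩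
  have hv2 : v2 ∈ zmultiples α := by rw [← hα]; exact ⟨0, 1, by simp⟩
  obtain ⟨p, hp⟩ := hv1
  obtain ⟨q, hq⟩ := hv2
  simp only [zsmul_eq_mul] at hp hq
  have hαne : α ≠ 0 := by
    intro h0
    rw [h0, mul_zero] at hp hq
    rw [← hp, ← hq] at hv
    norm_num at hv
  have hαpos : 0 < α := lt_of_le_of_ne hαnn (Ne.symm hαne)
  have hεα : 2 * ε ≤ α := by
    set k : ℤ := round (d / α) with hk
    have hmem : (-k : ℤ) • α ∈ latG v1 v2 := by
      rw [hα]; exact zsmul_mem (mem_zmultiples α) _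
    obtain ⟨a', b', hab⟩ := hmem
    have h1 := H a' b'
    rw [show d + a' * v1 + b' * v2 = d + (a' * v1 + b' * v2 : ℝ) by ring, ← hab] at h1
    have h2 : d + (-k : ℤ) • α = α * (d / α - k) := by
      rw [zsmul_eq_mul]
      push_cast
      field_simp
      ring
    rw [h2, abs_mul, abs_of_pos hαpos] at h1
    have h3 : |d / α - k| ≤ 1 / 2 := abs_sub_round (d / α)
    nlinarith
  have hαmem : α ∈ latG v1 v2 := by rw [hα]; exact mem_zmultiples α
  obtain ⟨a0, b0, hab0⟩ := hαmem
  have hcop : IsCoprime p q := by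
    refine ⟨a0, b0, ?_⟩
    have : (α : ℝ) * ((a0 * p + b0 * q : ℤ) : ℝ) = α * 1 := by
      push_cast
      rw [mul_one]
      calc α * (a0 * p + b0 * q) = a0 * (p * α) + b0 * (q * α) := by ring
        _ = a0 * v1 + b0 * v2 := by rw [hp, hq]
        _ = α := hab0.symm
    have h4 : ((a0 * p + b0 * q : ℤ) : ℝ) = (1 : ℝ) := mul_left_cancel₀ hαne this
    exact_mod_cast h4
  have hnorm : ((p : ℝ) ^ 2 + (q : ℝ) ^ 2) * α ^ 2 = 1 := by
    calc ((p : ℝ) ^ 2 + (q : ℝ) ^ 2) * α ^ 2 = (p * α) ^ 2 + (q * α) ^ 2 := by ring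
      _ = v1 ^ 2 + v2 ^ 2 := by rw [hp, hq]
      _ = 1 := hv
  have hα2 : α ^ 2 ≠ 0 := pow_ne_zero 2 hαne
  have hnn : (p : ℝ) ^ 2 + (q : ℝ) ^ 2 = 1 / α ^ 2 := by
    field_simp
    linarith [hnorm]
  refine ⟨p, q, hcop, ?_, ?_, ?_⟩
  · rw [hnn]
    have h5 : 4 * ε ^ 2 ≤ α ^ 2 := by nlinarith
    have h6 : 0 < 4 * ε ^ 2 := by positivity
    exact one_div_le_one_div_of_le h6 h5
  · rw [hnn]
    rw [show (1 : ℝ) / α ^ 2 = (1 / α) ^ 2 by ring, Real.sqrt_sq (by positivity)]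
    rw [← hp]
    field_simp
  · rw [hnn]
    rw [show (1 : ℝ) / α ^ 2 = (1 / α) ^ 2 by ring, Real.sqrt_sq (by positivity)]
    rw [← hq]
    field_simp

/-- Counting coprime lattice points in a disk of radius `1/(2ε)`. -/
lemma count_lemma (ε : ℝ) (hε : 0 < ε) :
    {x : ℤ × ℤ | IsCoprime x.1 x.2 ∧ ((x.1 : ℝ) ^ 2 + (x.2 : ℝ) ^ 2) ≤ 1 / (4 * ε ^ 2)}.Finite ∧
    (({x : ℤ × ℤ | IsCoprime x.1 x.2 ∧
        ((x.1 : ℝ) ^ 2 + (x.2 : ℝ) ^ 2) ≤ 1 / (4 * ε ^ 2)}.ncard : ℝ) ≤ 1 / ε ^ 2) := by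
  set T : Set (ℤ × ℤ) :=
    {x : ℤ × ℤ | IsCoprime x.1 x.2 ∧ ((x.1 : ℝ) ^ 2 + (x.2 : ℝ) ^ 2) ≤ 1 / (4 * ε ^ 2)} with hT
  by_cases hTe : T = ∅
  · rw [hTe]
    simp only [Set.finite_empty, Set.ncard_empty, Nat.cast_zero, true_and]
    positivity
  set N : ℕ := ⌊1 / (4 * ε ^ 2)⌋₊ with hNdef
  have hbd : ∀ x ∈ T, x.1 ^ 2 + x.2 ^ 2 ≤ (N : ℤ) := by
    rintro ⟨p, q⟩ ⟨-, hle⟩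
    show p ^ 2 + q ^ 2 ≤ (N : ℤ)
    have h1 : (((p ^ 2 + q ^ 2).toNat : ℤ) : ℝ) ≤ 1 / (4 * ε ^ 2) := by
      rw [Int.toNat_of_nonneg (by positivity)]
      push_cast
      exact hle
    have h2 : (p ^ 2 + q ^ 2).toNat ≤ N := Nat.le_floor (by exact_mod_cast h1)
    omega
  have hpos : ∀ x ∈ T, 1 ≤ x.1 ^ 2 + x.2 ^ 2 := by
    rintro ⟨p, q⟩ ⟨hcop, -⟩
    show 1 ≤ p ^ 2 + q ^ 2
    rcases eq_or_ne p 0 with rfl | hp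
    · rcases eq_or_ne q 0 with rfl | hq
      · exact absurd hcop (not_isCoprime_zero_zero)
      · have := Int.one_le_abs hq
        nlinarith [sq_abs q]
    · have := Int.one_le_abs hp
      nlinarith [sq_abs p, sq_nonneg q]
  have hN1 : 1 ≤ N := by
    obtain ⟨x, hx⟩ := Set.nonempty_iff_ne_empty.mpr hTe
    have := hbd x hx
    have := hpos x hx
    omega
  set m : ℕ := Nat.sqrt (N - 1) with hm
  set s : Finset ℤ := (Finset.Icc (-(m : ℤ)) m).erase 0 with hs
  set A : Finset (ℤ × ℤ) := {(1, 0), (-1, 0), (0, 1), (0, -1)} with hA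
  set F : Finset (ℤ × ℤ) := A ∪ s ×ˢ s with hF
  have hsub : T ⊆ ↑F := by
    rintro ⟨p, q⟩ hx
    have hcop := hx.1
    have hle : p ^ 2 + q ^ 2 ≤ (N : ℤ) := hbd _ hx
    simp only [Finset.coe_union, Set.mem_union, hF]
    rcases eq_or_ne q 0 with rfl | hq
    · left
      have : IsUnit p := by
        rw [← isCoprime_zero_right]; exact hcop
      rcases Int.isUnit_iff.mp this with rfl | rfl <;> simp [hA]
    rcases eq_or_ne p 0 with rfl | hp
    · left
      have : IsUnit q := by
        rw [← isCoprime_zero_left]; exact hcop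
      rcases Int.isUnit_iff.mp this with rfl | rfl <;> simp [hA]
    · right
      have habs : ∀ r u : ℤ, r ≠ 0 → u ≠ 0 → r ^ 2 + u ^ 2 ≤ (N : ℤ) → r ∈ s := by
        intro r u hr hu hru
        have h1 : 1 ≤ u ^ 2 := by
          have := Int.one_le_abs hu
          nlinarith [sq_abs u]
        have h2 : (r.natAbs : ℤ) ^ 2 ≤ (N : ℤ) - 1 := by
          have e : ((r.natAbs : ℤ)) ^ 2 = r ^ 2 := by rw [← Int.abs_eq_natAbs, sq_abs]
          omega
        have h3 : r.natAbs ^ 2 ≤ N - 1 := by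
          exact_mod_cast (by omega : (r.natAbs : ℤ) ^ 2 ≤ ((N - 1 : ℕ) : ℤ))
        have h4 : r.natAbs ≤ m := by
          rw [hm, Nat.le_sqrt]
          nlinarith [h3]
        simp only [hs, Finset.mem_erase, Finset.mem_Icc]
        refine ⟨hr, ?_, ?_⟩ <;> omega
      rw [Finset.coe_product, Set.mem_prod]
      exact ⟨habs p q hp hq hle, habs q p hq hp (by linarith)⟩
  have hTfin : T.Finite := Set.Finite.subset F.finite_toSet hsub
  refine ⟨hTfin, ?_⟩
  have hscard : s.card ≤ 2 * m := by
    have h0 : (0 : ℤ) ∈ Finset.Icc (-(m : ℤ)) m := by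
      simp [Finset.mem_Icc]
    rw [hs, Finset.card_erase_of_mem h0, Int.card_Icc]
    omega
  have hFcard : F.card ≤ 4 * N := by
    calc F.card ≤ A.card + (s ×ˢ s).card := Finset.card_union_le _ _
      _ ≤ 4 + s.card * s.card := by
          rw [Finset.card_product]
          have : A.card ≤ 4 := by
            rw [hA]
            apply le_trans (Finset.card_insert_le _ _)
            apply Nat.succ_le_succ
            apply le_trans (Finset.card_insert_le _ _)
            apply Nat.succ_le_succ
            apply le_trans (Finset.card_insert_le _ _)
            simp
          omega
      _ ≤ 4 + (2 * m) * (2 * m) := by nlinarith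
      _ ≤ 4 + 4 * (N - 1) := by
          have := Nat.sqrt_le' (N - 1)
          rw [← hm] at this
          nlinarith
      _ ≤ 4 * N := by omega
  have hcard : T.ncard ≤ 4 * N := by
    calc T.ncard ≤ (↑F : Set (ℤ × ℤ)).ncard := Set.ncard_le_ncard hsub F.finite_toSet
      _ = F.card := Set.ncard_coe_finset F
      _ ≤ 4 * N := hFcard
  have hNle : (N : ℝ) ≤ 1 / (4 * ε ^ 2) := Nat.floor_le (by positivity)
  calc (T.ncard : ℝ) ≤ ((4 * N : ℕ) : ℝ) := by exact_mod_cast hcard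
    _ = 4 * (N : ℝ) := by push_cast; ring
    _ ≤ 4 * (1 / (4 * ε ^ 2)) := by linarith
    _ = 1 / ε ^ 2 := by field_simp

lemma int_coe_zero (a : ℤ) : ((a : ℝ) : AddCircle (1:ℝ)) = 0 := by
  rw [AddCircle.coe_eq_zero_iff]
  exact ⟨a, by simp⟩

lemma shift_coe (x : ℝ) (a : ℤ) : ((x + a : ℝ) : AddCircle (1:ℝ)) = (x : AddCircle (1:ℝ)) := by
  rw [AddCircle.coe_add, int_coe_zero, add_zero]

/-- A direction whose geodesic misses the ball satisfies the hypothesis of `key_lemma`. -/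
lemma line_lemma (ε : ℝ) (hε : 0 < ε) (ω : Set T2) (c : ℝ × ℝ)
    (hc : ∀ p : ℝ × ℝ, Real.sqrt ((p.1 - c.1)^2 + (p.2 - c.2)^2) < ε → torusProj p ∈ ω)
    (v : ℝ × ℝ) (hv : v.1^2 + v.2^2 = 1) (z : T2) (hz : torusLine z v ∩ ω = ∅) :
    ∃ d : ℝ, ∀ a b : ℤ, ε ≤ |d + a * v.1 + b * v.2| := by
  obtain ⟨z1, hz1⟩ := QuotientAddGroup.mk_surjective z.1
  obtain ⟨z2, hz2⟩ := QuotientAddGroup.mk_surjective z.2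
  have hline : ∀ (t : ℝ) (a b : ℤ),
      ε ≤ Real.sqrt ((z1 + t * v.1 + a - c.1)^2 + (z2 + t * v.2 + b - c.2)^2) := by
    intro t a b
    by_contra hlt
    push_neg at hlt
    have hmem : torusProj (z1 + t * v.1 + a, z2 + t * v.2 + b) ∈ ω := hc _ hlt
    have hmem2 : torusProj (z1 + t * v.1 + a, z2 + t * v.2 + b) ∈ torusLine z v := by
      refine ⟨t, ?_⟩
      have e1 : z = (↑z1, ↑z2) := by
        ext
        · exact hz1.symm
        · exact hz2.symm
      rw [e1]
      show (((z1 + t * v.1 + a : ℝ) : AddCircle (1:ℝ)), ((z2 + t * v.2 + b : ℝ) : AddCircle (1:ℝ)))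
        = ((z1 : AddCircle (1:ℝ)) + ((t • v).1 : AddCircle (1:ℝ)),
           (z2 : AddCircle (1:ℝ)) + ((t • v).2 : AddCircle (1:ℝ)))
      have e2 : (t • v).1 = t * v.1 := rfl
      have e3 : (t • v).2 = t * v.2 := rfl
      rw [e2, e3, Prod.mk.injEq]
      refine ⟨?_, ?_⟩
      · rw [shift_coe (z1 + t * v.1) a, AddCircle.coe_add]
      · rw [shift_coe (z2 + t * v.2) b, AddCircle.coe_add]
    have hcontra : torusProj (z1 + t * v.1 + a, z2 + t * v.2 + b) ∈ torusLine z v ∩ ω :=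
      ⟨hmem2, hmem⟩
    rw [hz] at hcontra
    exact hcontra
  refine ⟨(z1 - c.1) * v.2 - (z2 - c.2) * v.1, ?_⟩
  intro a b
  set u1 : ℝ := z1 - c.1 + b with hu1
  set u2 : ℝ := z2 - c.2 - a with hu2
  set t : ℝ := -(u1 * v.1 + u2 * v.2) with ht
  have h1 := hline t b (-a)
  have hX : (z1 + t * v.1 + (b : ℝ) - c.1)^2 + (z2 + t * v.2 + ((-a : ℤ) : ℝ) - c.2)^2
      = ((z1 - c.1) * v.2 - (z2 - c.2) * v.1 + a * v.1 + b * v.2)^2 := by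
    push_cast
    rw [ht, hu1, hu2]
    linear_combination (((z1 - c.1 + b) * v.1 + (z2 - c.2 - a) * v.2)^2
      - (z1 - c.1 + b)^2 - (z2 - c.2 - a)^2) * hv
  rw [hX, Real.sqrt_sq_eq_abs] at h1
  exact h1

/-- If `ω ⊆ 𝕋²` contains an open (Euclidean) ball of radius `ε`, then there are at most
`1/ε²` directions `v ∈ 𝕊¹` such that some geodesic `L_{z,v}` is disjoint from `ω`. -/
theorem stmt0 (ε : ℝ) (hε : 0 < ε) (ω : Set T2)
    (hball : ∃ c : ℝ × ℝ, ∀ p : ℝ × ℝ,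
      Real.sqrt ((p.1 - c.1)^2 + (p.2 - c.2)^2) < ε → torusProj p ∈ ω) :
    {v : ℝ × ℝ | v.1^2 + v.2^2 = 1 ∧ ∃ z : T2, torusLine z v ∩ ω = ∅}.Finite ∧
    (Nat.card {v : ℝ × ℝ | v.1^2 + v.2^2 = 1 ∧ ∃ z : T2, torusLine z v ∩ ω = ∅} : ℝ)
      ≤ 1 / ε^2 := by
  set S := {v : ℝ × ℝ | v.1^2 + v.2^2 = 1 ∧ ∃ z : T2, torusLine z v ∩ ω = ∅} with hS
  obtain ⟨c, hc⟩ := hball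
  set f : ℤ × ℤ → ℝ × ℝ := fun x =>
    ((x.1 : ℝ) / Real.sqrt ((x.1 : ℝ)^2 + (x.2 : ℝ)^2),
     (x.2 : ℝ) / Real.sqrt ((x.1 : ℝ)^2 + (x.2 : ℝ)^2)) with hf
  set T := {x : ℤ × ℤ | IsCoprime x.1 x.2 ∧
    ((x.1 : ℝ) ^ 2 + (x.2 : ℝ) ^ 2) ≤ 1 / (4 * ε ^ 2)} with hT
  have hsub : S ⊆ f '' T := by
    rintro v ⟨hv, z, hz⟩
    obtain ⟨d, H⟩ := line_lemma ε hε ω c hc v hv z hz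
    obtain ⟨p, q, hcop, hbound, h1, h2⟩ := key_lemma ε hε v.1 v.2 hv d H
    refine ⟨(p, q), ⟨hcop, hbound⟩, ?_⟩
    rw [Prod.ext_iff]
    constructor
    · simp only [hf]
      exact h1.symm
    · simp only [hf]
      exact h2.symm
  obtain ⟨hTfin, hTcard⟩ := count_lemma ε hε
  have hSfin : S.Finite := (hTfin.image f).subset hsub
  refine ⟨hSfin, ?_⟩
  rw [Nat.card_coe_set_eq]
  calc (S.ncard : ℝ) ≤ ((f '' T).ncard : ℝ) :=
        Nat.cast_le.mpr (Set.ncard_le_ncard hsub (hTfin.image f))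
    _ ≤ (T.ncard : ℝ) := Nat.cast_le.mpr (Set.ncard_image_le hTfin)
    _ ≤ 1 / ε ^ 2 := hTcard
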